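/- Let d ≥ 1 and for Δ ≥ 0 let V_1(Δ) denote the Lebesgue volume of the intersection of two closed unit balls in ℝ^d whose centers are at distance Δ from each other. Then V_1(Δ) = ω_d − ω_{d−1} Δ + o(Δ) as Δ → 0⁺; equivalently, lim_{Δ→0⁺} (ω_d − V_1(Δ))/Δ = ω_{d−1}. -/

import Mathlib

open MeasureTheory Metric Filter

/-- `ω k`: the Lebesgue volume of the closed unit ball in `ℝ^k` (with `ω 0 = 1`). -/
noncomputable def unitBallVol (k : ℕ) : ℝ :=
  (volume (closedBall (0 : EuclideanSpace ℝ (Fin k)) 1)).toReal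

/-- `V₁ d Δ`: the Lebesgue volume of the intersection of two closed unit balls in
`ℝ^d` (`d ≥ 1`) whose centers are at distance `Δ` from each other (for `Δ ≥ 0`). -/
noncomputable def V₁ (d : ℕ) (hd : 0 < d) (Δ : ℝ) : ℝ :=
  (volume (closedBall (0 : EuclideanSpace ℝ (Fin d)) 1 ∩
    closedBall (EuclideanSpace.single (⟨0, hd⟩ : Fin d) Δ) 1)).toReal

namespace VolAux

noncomputable def Ω (k : ℕ) : ENNReal := volume (closedBall (0 : EuclideanSpace ℝ (Fin k)) 1)

lemma Ω_ne_top (k : ℕ) : Ω k ≠ ⊤ := measure_closedBall_lt_top.ne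

lemma norm_le_iff_sum_sq {n : ℕ} (x : EuclideanSpace ℝ (Fin n)) {r : ℝ} (hr : 0 ≤ r) :
    ‖x‖ ≤ r ↔ ∑ i, x i ^ 2 ≤ r ^ 2 := by
  rw [EuclideanSpace.norm_eq]
  simp only [Real.norm_eq_abs, sq_abs]
  constructor
  · intro h
    have h0 : Real.sqrt (∑ i, x i ^ 2) ^ 2 ≤ r ^ 2 := by
      apply pow_le_pow_left₀ (Real.sqrt_nonneg _) h
    rwa [Real.sq_sqrt (by positivity)] at h0
  · intro h
    calc Real.sqrt (∑ i, x i ^ 2) ≤ Real.sqrt (r ^ 2) := Real.sqrt_le_sqrt h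
    _ = r := Real.sqrt_sq hr

lemma measurable_coord {n : ℕ} (i : Fin n) :
    Measurable fun x : EuclideanSpace ℝ (Fin n) => x i :=
  (measurable_pi_apply i).comp (MeasurableEquiv.toLp 2 (Fin n → ℝ)).symm.measurable

lemma ball_set_vol (n : ℕ) {c : ℝ} (hc : 0 ≤ c) :
    volume {y : Fin n → ℝ | ∑ i, y i ^ 2 ≤ c}
      = ENNReal.ofReal (Real.sqrt c ^ n) * Ω n := by
  have hmeas : MeasurableSet {y : Fin n → ℝ | ∑ i, y i ^ 2 ≤ c} := by
    apply measurableSet_le _ measurable_const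
    exact Finset.measurable_sum _ fun i _ => (measurable_pi_apply i).pow_const 2
  have hset : (MeasurableEquiv.toLp 2 (Fin n → ℝ)).symm ⁻¹' {y : Fin n → ℝ | ∑ i, y i ^ 2 ≤ c}
      = closedBall (0 : EuclideanSpace ℝ (Fin n)) (Real.sqrt c) := by
    ext x
    rw [mem_closedBall, dist_zero_right, Set.mem_preimage, Set.mem_setOf_eq,
      norm_le_iff_sum_sq x (Real.sqrt_nonneg c), Real.sq_sqrt hc]
    rfl
  rw [← (EuclideanSpace.volume_preserving_symm_measurableEquiv_toLp (Fin n)).measure_preimage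
    hmeas.nullMeasurableSet, hset,
    Measure.addHaar_closedBall _ _ (Real.sqrt_nonneg c), finrank_euclideanSpace_fin]
  rw [Ω, ← Measure.addHaar_unitClosedBall_eq_addHaar_unitBall]

lemma cyl_vol (n : ℕ) (a b : ℝ) {c : ℝ} (hc : 0 ≤ c) :
    volume {x : EuclideanSpace ℝ (Fin (n + 1)) |
        x 0 ∈ Set.Ioc a b ∧ ∑ i : Fin n, x (Fin.succ i) ^ 2 ≤ c}
      = ENNReal.ofReal (b - a) * (ENNReal.ofReal (Real.sqrt c ^ n) * Ω n) := by
  classical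
  set T : Set (Fin n → ℝ) := {y | ∑ i, y i ^ 2 ≤ c} with hT
  have hTmeas : MeasurableSet T := by
    apply measurableSet_le _ measurable_const
    exact Finset.measurable_sum _ fun i _ => (measurable_pi_apply i).pow_const 2
  set S : Set (Fin (n + 1) → ℝ) :=
    (MeasurableEquiv.piFinSuccAbove (fun _ => ℝ) 0) ⁻¹' (Set.Ioc a b ×ˢ T) with hS
  have hSdesc : S = {x : Fin (n + 1) → ℝ |
      x 0 ∈ Set.Ioc a b ∧ ∑ i : Fin n, x (Fin.succ i) ^ 2 ≤ c} := by
    ext x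
    simp [hS, hT, MeasurableEquiv.piFinSuccAbove, Fin.zero_succAbove, Fin.removeNth, Fin.tail]
  have hSmeas : MeasurableSet S :=
    (MeasurableEquiv.piFinSuccAbove (fun _ => ℝ) 0).measurable
      (measurableSet_Ioc.prod hTmeas)
  have h1 : {x : EuclideanSpace ℝ (Fin (n + 1)) |
        x 0 ∈ Set.Ioc a b ∧ ∑ i : Fin n, x (Fin.succ i) ^ 2 ≤ c}
      = (MeasurableEquiv.toLp 2 (Fin (n + 1) → ℝ)).symm ⁻¹' S := by
    rw [hSdesc]; rfl
  rw [h1, (EuclideanSpace.volume_preserving_symm_measurableEquiv_toLp (Fin (n + 1))).measure_preimage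
    hSmeas.nullMeasurableSet, hS,
    show (volume : Measure (Fin (n+1) → ℝ)) = Measure.pi (fun _ => volume) from rfl,
    (measurePreserving_piFinSuccAbove (fun _ : Fin (n+1) => (volume : Measure ℝ)) 0).measure_preimage
      (measurableSet_Ioc.prod hTmeas).nullMeasurableSet,
    Measure.prod_prod, Real.volume_Ioc, ← ball_set_vol n hc]
  rfl

end VolAux

open VolAux in
/-- `V₁(Δ) = ω_d - ω_{d-1} Δ + o(Δ)` as `Δ → 0⁺`; equivalently,
`lim_{Δ→0⁺} (ω_d - V₁(Δ))/Δ = ω_{d-1}`. -/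
theorem vol_inter_unit_balls_asymptotics {d : ℕ} (hd : 0 < d) :
    Tendsto (fun Δ : ℝ => (unitBallVol d - V₁ d hd Δ) / Δ)
      (nhdsWithin 0 (Set.Ioi 0)) (nhds (unitBallVol (d - 1))) := by
  obtain ⟨n, rfl⟩ : ∃ n, d = n + 1 := ⟨d - 1, (Nat.succ_pred_eq_of_pos hd).symm⟩
  have memB : ∀ (c x : EuclideanSpace ℝ (Fin (n+1))),
      x ∈ closedBall c 1 ↔ ‖x - c‖ ^ 2 ≤ 1 := by
    intro c x
    rw [mem_closedBall_iff_norm]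
    constructor
    · intro h; nlinarith [norm_nonneg (x - c)]
    · intro h; nlinarith [norm_nonneg (x - c)]
  -- main identity: ω_d - V₁ Δ = volume of ball ∩ slab
  have key : ∀ Δ : ℝ, Δ ∈ Set.Ioo (0:ℝ) 1 →
      unitBallVol (n+1) - V₁ (n+1) hd Δ
        = (volume ({x : EuclideanSpace ℝ (Fin (n+1)) | x 0 ∈ Set.Ioc (-(Δ/2)) (Δ/2)}
            ∩ closedBall (0 : EuclideanSpace ℝ (Fin (n+1))) 1)).toReal := by
    intro Δ hΔ
    obtain ⟨hΔ0, hΔ1⟩ := hΔ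
    set v : EuclideanSpace ℝ (Fin (n+1)) := EuclideanSpace.single (0 : Fin (n+1)) Δ with hv
    set B₀ : Set (EuclideanSpace ℝ (Fin (n+1))) := closedBall 0 1 with hB₀
    set B₁ : Set (EuclideanSpace ℝ (Fin (n+1))) := closedBall v 1 with hB₁
    set H : Set (EuclideanSpace ℝ (Fin (n+1))) := {x | x 0 ≤ Δ/2} with hH
    set H' : Set (EuclideanSpace ℝ (Fin (n+1))) := {x | x 0 ≤ -(Δ/2)} with hH'
    have hnorm : ∀ x : EuclideanSpace ℝ (Fin (n+1)),
        ‖x - v‖ ^ 2 = ‖x‖ ^ 2 - 2 * (Δ * x 0) + Δ ^ 2 := by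
      intro x
      rw [hv, norm_sub_sq_real, EuclideanSpace.inner_single_right,
        EuclideanSpace.norm_single]
      simp [Real.norm_eq_abs, sq_abs, mul_comm]
    have hnorm0 : ∀ x : EuclideanSpace ℝ (Fin (n+1)), x ∈ B₀ ↔ ‖x‖ ^ 2 ≤ 1 := by
      intro x; rw [hB₀, memB 0 x, sub_zero]
    have hmemB₁ : ∀ x : EuclideanSpace ℝ (Fin (n+1)),
        x ∈ B₁ ↔ ‖x‖ ^ 2 - 2 * (Δ * x 0) + Δ ^ 2 ≤ 1 := by
      intro x; rw [hB₁, memB v x, hnorm x]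
    have hHmeas : MeasurableSet H := measurableSet_le (measurable_coord 0) measurable_const
    have hH'meas : MeasurableSet H' := measurableSet_le (measurable_coord 0) measurable_const
    have hB₀meas : MeasurableSet B₀ := measurableSet_closedBall
    have hB₁meas : MeasurableSet B₁ := measurableSet_closedBall
    -- step 1 : B₀ \ B₁ ⊆ H
    have step1 : B₀ \ B₁ = (B₀ ∩ H) \ (B₁ ∩ H) := by
      have hsub : B₀ \ B₁ ⊆ H := by
        rintro x ⟨hx0, hx1⟩
        by_contra hxH
        rw [hH, Set.mem_setOf_eq, not_le] at hxH
        exact hx1 ((hmemB₁ x).2 (by nlinarith [(hnorm0 x).1 hx0]))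
      ext x
      constructor
      · intro hx
        exact ⟨⟨hx.1, hsub hx⟩, fun h => hx.2 h.1⟩
      · rintro ⟨⟨hx0, hxH⟩, hx⟩
        exact ⟨hx0, fun h => hx ⟨h, hxH⟩⟩
    -- step 2 : B₁ ∩ H ⊆ B₀ ∩ H
    have step2 : B₁ ∩ H ⊆ B₀ ∩ H := by
      rintro x ⟨hx1, hxH⟩
      rw [hH, Set.mem_setOf_eq] at hxH
      refine ⟨(hnorm0 x).2 ?_, hxH⟩
      have := (hmemB₁ x).1 hx1
      nlinarith
    -- step 3 : translation
    have step3 : B₀ ∩ H' = (· + v) ⁻¹' (B₁ ∩ H) := by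
      ext x
      show x ∈ B₀ ∩ H' ↔ x + v ∈ B₁ ∩ H
      have hadd : (x + v) 0 = x 0 + Δ := by
        simp [hv, PiLp.add_apply, EuclideanSpace.single_apply]
      constructor
      · rintro ⟨hx0, hxH'⟩
        rw [hH', Set.mem_setOf_eq] at hxH'
        refine ⟨(memB v (x + v)).2 ?_, ?_⟩
        · rw [add_sub_cancel_right]
          exact ((hnorm0 x).1 hx0)
        · rw [hH, Set.mem_setOf_eq, hadd]; linarith
      · rintro ⟨hx1, hxH⟩
        rw [hH, Set.mem_setOf_eq, hadd] at hxH
        rw [memB v (x + v), add_sub_cancel_right] at hx1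
        exact ⟨(hnorm0 x).2 hx1, by rw [hH', Set.mem_setOf_eq]; linarith⟩
    have hμ3 : volume (B₀ ∩ H') = volume (B₁ ∩ H) := by
      rw [step3]
      exact (measurePreserving_add_right volume v).measure_preimage
        (hB₁meas.inter hHmeas).nullMeasurableSet
    -- measure chain
    have hfin : ∀ s : Set (EuclideanSpace ℝ (Fin (n+1))), s ⊆ B₀ → volume s ≠ ⊤ :=
      fun s hs => ((measure_mono hs).trans_lt measure_closedBall_lt_top).ne
    have hchain : volume (B₀ \ B₁)
        = volume ({x : EuclideanSpace ℝ (Fin (n+1)) | x 0 ∈ Set.Ioc (-(Δ/2)) (Δ/2)} ∩ B₀) := by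
      have e1 : volume (B₀ \ B₁) = volume (B₀ ∩ H) - volume (B₁ ∩ H) := by
        rw [step1, measure_diff step2 (hB₁meas.inter hHmeas).nullMeasurableSet
          ((measure_mono Set.inter_subset_left).trans_lt
            (measure_closedBall_lt_top (x := v) (r := 1))).ne]
      have hsub' : B₀ ∩ H' ⊆ B₀ ∩ H :=
        Set.inter_subset_inter_right _ (fun x hx => by
          rw [hH', Set.mem_setOf_eq] at hx; rw [hH, Set.mem_setOf_eq]; linarith)
      have e2 : volume ((B₀ ∩ H) \ (B₀ ∩ H')) = volume (B₀ ∩ H) - volume (B₀ ∩ H') := by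
        rw [measure_diff hsub' (hB₀meas.inter hH'meas).nullMeasurableSet
          (hfin _ Set.inter_subset_left)]
      have e3 : (B₀ ∩ H) \ (B₀ ∩ H')
          = {x : EuclideanSpace ℝ (Fin (n+1)) | x 0 ∈ Set.Ioc (-(Δ/2)) (Δ/2)} ∩ B₀ := by
        ext x
        simp only [Set.mem_diff, Set.mem_inter_iff, Set.mem_setOf_eq, hH, hH', Set.mem_Ioc,
          not_and, not_le]
        constructor
        · rintro ⟨⟨hx0, hxH⟩, hx⟩
          exact ⟨⟨hx hx0, hxH⟩, hx0⟩
        · rintro ⟨⟨hlt, hle⟩, hx0⟩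
          exact ⟨⟨hx0, hle⟩, fun _ => hlt⟩
      rw [e1, ← hμ3, ← e2, e3]
    -- ω_d - V₁ = volume (B₀ \ B₁)
    have hV : unitBallVol (n+1) - V₁ (n+1) hd Δ = (volume (B₀ \ B₁)).toReal := by
      have hd' : B₀ \ B₁ = B₀ \ (B₀ ∩ B₁) := by rw [Set.diff_self_inter]
      rw [hd', measure_diff Set.inter_subset_left (hB₀meas.inter hB₁meas).nullMeasurableSet
        (hfin _ Set.inter_subset_left),
        ENNReal.toReal_sub_of_le (measure_mono Set.inter_subset_left)
          measure_closedBall_lt_top.ne]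
      rfl
    rw [hV, hchain]
  -- bounds
  have bnd : ∀ Δ : ℝ, Δ ∈ Set.Ioo (0:ℝ) 1 →
      Δ * (Real.sqrt (1 - Δ^2/4) ^ n * unitBallVol n)
        ≤ unitBallVol (n+1) - V₁ (n+1) hd Δ ∧
      unitBallVol (n+1) - V₁ (n+1) hd Δ ≤ Δ * unitBallVol n := by
    intro Δ hΔ
    obtain ⟨hΔ0, hΔ1⟩ := hΔ
    rw [key Δ ⟨hΔ0, hΔ1⟩]
    have hc : (0:ℝ) ≤ 1 - Δ^2/4 := by nlinarith
    have hball : ∀ x : EuclideanSpace ℝ (Fin (n+1)),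
        x ∈ closedBall (0 : EuclideanSpace ℝ (Fin (n+1))) 1 ↔ ∑ i, x i ^ 2 ≤ 1 := by
      intro x
      rw [mem_closedBall, dist_zero_right, norm_le_iff_sum_sq x zero_le_one, one_pow]
    -- upper bound
    have hup : {x : EuclideanSpace ℝ (Fin (n+1)) | x 0 ∈ Set.Ioc (-(Δ/2)) (Δ/2)}
          ∩ closedBall (0 : EuclideanSpace ℝ (Fin (n+1))) 1
        ⊆ {x : EuclideanSpace ℝ (Fin (n+1)) |
            x 0 ∈ Set.Ioc (-(Δ/2)) (Δ/2) ∧ ∑ i : Fin n, x (Fin.succ i) ^ 2 ≤ 1} := by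
      rintro x ⟨hx1, hx2⟩
      refine ⟨hx1, ?_⟩
      have := (hball x).1 hx2
      rw [Fin.sum_univ_succ] at this
      nlinarith [sq_nonneg (x 0)]
    have hlo : {x : EuclideanSpace ℝ (Fin (n+1)) |
            x 0 ∈ Set.Ioc (-(Δ/2)) (Δ/2) ∧ ∑ i : Fin n, x (Fin.succ i) ^ 2 ≤ 1 - Δ^2/4}
        ⊆ {x : EuclideanSpace ℝ (Fin (n+1)) | x 0 ∈ Set.Ioc (-(Δ/2)) (Δ/2)}
          ∩ closedBall (0 : EuclideanSpace ℝ (Fin (n+1))) 1 := by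
      rintro x ⟨hx1, hx2⟩
      refine ⟨hx1, (hball x).2 ?_⟩
      rw [Fin.sum_univ_succ]
      obtain ⟨ha, hb⟩ := hx1
      nlinarith
    have hcylup := cyl_vol n (-(Δ/2)) (Δ/2) (zero_le_one (α := ℝ))
    have hcyllo := cyl_vol n (-(Δ/2)) (Δ/2) hc
    have hΔeq : Δ/2 - -(Δ/2) = Δ := by ring
    rw [hΔeq] at hcylup hcyllo
    have hfin' : volume ({x : EuclideanSpace ℝ (Fin (n+1)) | x 0 ∈ Set.Ioc (-(Δ/2)) (Δ/2)}
          ∩ closedBall (0 : EuclideanSpace ℝ (Fin (n+1))) 1) ≠ ⊤ :=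
      ((measure_mono Set.inter_subset_right).trans_lt measure_closedBall_lt_top).ne
    constructor
    · have h1 := measure_mono (μ := volume) hlo
      rw [hcyllo] at h1
      have h2 := ENNReal.toReal_mono hfin' h1
      rw [ENNReal.toReal_mul, ENNReal.toReal_mul, ENNReal.toReal_ofReal hΔ0.le,
        ENNReal.toReal_ofReal (by positivity)] at h2
      exact h2
    · have h1 := measure_mono (μ := volume) hup
      rw [hcylup] at h1
      have h2 := ENNReal.toReal_mono (ENNReal.mul_ne_top ENNReal.ofReal_ne_top
          (ENNReal.mul_ne_top ENNReal.ofReal_ne_top (Ω_ne_top n))) h1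
      rw [ENNReal.toReal_mul, ENNReal.toReal_mul, ENNReal.toReal_ofReal hΔ0.le,
        ENNReal.toReal_ofReal (by positivity), Real.sqrt_one, one_pow, one_mul] at h2
      exact h2
  -- assemble
  have hgoal : unitBallVol (n + 1 - 1) = unitBallVol n := rfl
  rw [hgoal]
  have hmem : Set.Ioo (0:ℝ) 1 ∈ nhdsWithin (0:ℝ) (Set.Ioi 0) :=
    Ioo_mem_nhdsGT_of_mem ⟨le_refl 0, one_pos⟩
  apply tendsto_of_tendsto_of_tendsto_of_le_of_le'
    (g := fun Δ : ℝ => Real.sqrt (1 - Δ^2/4) ^ n * unitBallVol n)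
    (h := fun _ : ℝ => unitBallVol n)
  · have hcont : Continuous fun Δ : ℝ => Real.sqrt (1 - Δ^2/4) ^ n * unitBallVol n := by
      apply Continuous.mul _ continuous_const
      exact (Real.continuous_sqrt.comp (by continuity)).pow n
    have := (hcont.tendsto 0).mono_left (nhdsWithin_le_nhds (s := Set.Ioi (0:ℝ)))
    simpa using this
  · exact tendsto_const_nhds
  · filter_upwards [hmem] with Δ hΔ
    have h := (bnd Δ hΔ).1
    rw [le_div_iff₀ hΔ.1]
    linarith [h]
  · filter_upwards [hmem] with Δ hΔ
    have h := (bnd Δ hΔ).2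
    rw [div_le_iff₀ hΔ.1]
    linarith [h]
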